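/- Let (∂, σ; σ̄, σ̂) be a free right twisted multi-derivation on A with induced first order differential calculus Ω¹(A) = A^n_σ (left A-basis ω₁, …, ω_n), and let ξ_i ∈ Hom_A(Ω¹(A), A) be determined by ξ_i(ω_j) = δ_ij. Then every f ∈ Hom_A(Ω¹(A), A) satisfies f = Σ_{i,k} ξ_i · σ̂_ik(f(ω_k)), where · denotes the right A-action (f·a)(ω) = f(a·ω). -/
import Mathlib


/-!
# Statement 9

Let `(∂, σ; σ̄, σ̂)` be a free right twisted multi-derivation on `A` with induced
first order calculus `Ω¹(A) = A^n_σ` (free left `A`-module on `ω₁, …, ω_n`, right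
action `(x·a)_i = Σ_j x_j σ_ji(a)`), and let `ξ_i ∈ Hom_A(Ω¹(A), A)` be determined
by `ξ_i(ω_j) = δ_ij`.  Then every `f ∈ Hom_A(Ω¹(A), A)` satisfies
`f = Σ_{i,l} ξ_i · σ̂_il(f(ω_l))`, where `(f·a)(x) = f(a • x)`.
-/

namespace Stmt9

variable {k A : Type*} [Field k] [Ring A] [Algebra k A] {n : ℕ}

/-- The freeness conditions for `(σ, σ̄, σ̂)`. -/
def IsFreePair (σ σbar σhat : A →ₐ[k] Matrix (Fin n) (Fin n) A) : Prop :=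
  (∀ (i j : Fin n) (a : A),
      (∑ l, σbar (σ a j l) i l) = if i = j then a else 0) ∧
  (∀ (i j : Fin n) (a : A),
      (∑ l, σ (σbar a l j) l i) = if i = j then a else 0) ∧
  (∀ (i j : Fin n) (a : A),
      (∑ l, σhat (σbar a j l) i l) = if i = j then a else 0) ∧
  (∀ (i j : Fin n) (a : A),
      (∑ l, σbar (σhat a l j) l i) = if i = j then a else 0)

variable (σ : A →ₐ[k] Matrix (Fin n) (Fin n) A)

/-- Right `A`-action on `Ω¹(A) = A^n_σ` in left coordinates. -/
def ract (x : Fin n → A) (a : A) : Fin n → A := fun i => ∑ j, x j * σ a j i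

/-- Left multiplication on `Ω¹(A)` (coordinatewise). -/
def lmulPi (a : A) : (Fin n → A) →ₗ[k] (Fin n → A) where
  toFun x := fun i => a * x i
  map_add' x y := by funext i; simp [mul_add]
  map_smul' c x := by funext i; simp [mul_smul_comm]

/-- `Hom_A(Ω¹(A), A)`: right `A`-linear maps. -/
def homD : Submodule k ((Fin n → A) →ₗ[k] A) where
  carrier := {f | ∀ (x : Fin n → A) (a : A), f (ract σ x a) = f x * a}
  add_mem' {f g} hf hg := by
    intro x a
    simp only [LinearMap.add_apply, hf x a, hg x a, add_mul]
  zero_mem' := by intro x a; simp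
  smul_mem' c f hf := by
    intro x a
    simp only [LinearMap.smul_apply, hf x a, smul_mul_assoc]

/-- The left basis `ω_i` of `Ω¹(A)`. -/
def om (i : Fin n) : Fin n → A := Pi.single i 1

/--
In the setting of a free right twisted multi-derivation
`(∂, σ; σ̄, σ̂)`, every right `A`-linear map `f : Ω¹(A) → A` decomposes as
`f = Σ_{i,l} ξ_i · σ̂_il(f(ω_l))`.
-/
theorem dual_basis_expansion
    (σbar σhat : A →ₐ[k] Matrix (Fin n) (Fin n) A)
    (hfree : IsFreePair σ σbar σhat)
    (del : Fin n → (A →ₗ[k] A))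
    (hder : ∀ (a b : A) (i : Fin n),
      del i (a * b) = (∑ j, del j a * σ b j i) + a * del i b)
    (ξ : Fin n → homD σ)
    (hξ : ∀ i j, (ξ i).1 (om j) = if i = j then (1 : A) else 0) :
    ∀ (f : homD σ) (x : Fin n → A),
      f.1 x = ∑ i, ∑ l, (ξ i).1 (lmulPi (k := k) (σhat (f.1 (om l)) i l) x) := by
  intro f x
  have h2 := hfree.2.1
  have h4 := hfree.2.2.2
  have hract : ∀ (j : Fin n) (a : A) (m : Fin n), ract σ (om j) a m = σ a j m := by
    intro j a m
    simp [ract, om, Pi.single_apply]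
  have hsingle : ∀ (a : A) (i : Fin n),
      (Pi.single i a : Fin n → A) = ∑ j, ract σ (om j) (σbar a j i) := by
    intro a i
    funext m
    simp only [Finset.sum_apply, hract]
    rw [h2 m i a]
    simp [Pi.single_apply]
  have hf : ∀ (g : homD σ) (y : Fin n → A),
      g.1 y = ∑ m, ∑ j, g.1 (om j) * σbar (y m) j m := by
    intro g y
    conv_lhs => rw [show y = ∑ m, Pi.single m (y m) from (Finset.univ_sum_single y).symm]
    rw [map_sum]
    refine Finset.sum_congr rfl fun m _ => ?_
    rw [hsingle (y m) m, map_sum]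
    exact Finset.sum_congr rfl fun j _ => g.2 (om j) (σbar (y m) j m)
  have hxi : ∀ (i : Fin n) (y : Fin n → A), (ξ i).1 y = ∑ m, σbar (y m) i m := by
    intro i y
    rw [hf (ξ i) y]
    refine Finset.sum_congr rfl fun m _ => ?_
    simp [hξ]
  have hterm : ∀ i l, (ξ i).1 (lmulPi (k := k) (σhat (f.1 (om l)) i l) x)
      = ∑ m, ∑ p, σbar (σhat (f.1 (om l)) i l) i p * σbar (x m) p m := by
    intro i l
    rw [hxi]
    refine Finset.sum_congr rfl fun m _ => ?_
    show σbar (σhat (f.1 (om l)) i l * x m) i m = _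
    rw [map_mul, Matrix.mul_apply]
  have key : ∀ l m, (∑ i, ∑ p, σbar (σhat (f.1 (om l)) i l) i p * σbar (x m) p m)
      = f.1 (om l) * σbar (x m) l m := by
    intro l m
    rw [Finset.sum_comm]
    have hp : ∀ p, (∑ i, σbar (σhat (f.1 (om l)) i l) i p * σbar (x m) p m)
        = (if p = l then f.1 (om l) else 0) * σbar (x m) p m := by
      intro p
      rw [← Finset.sum_mul, h4 p l (f.1 (om l))]
    simp only [hp, ite_mul, zero_mul]
    simp
  symm
  calc (∑ i, ∑ l, (ξ i).1 (lmulPi (k := k) (σhat (f.1 (om l)) i l) x))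
      = ∑ i, ∑ l, ∑ m, ∑ p, σbar (σhat (f.1 (om l)) i l) i p * σbar (x m) p m := by
        simp only [hterm]
    _ = ∑ l, ∑ i, ∑ m, ∑ p, σbar (σhat (f.1 (om l)) i l) i p * σbar (x m) p m :=
        Finset.sum_comm
    _ = ∑ l, ∑ m, ∑ i, ∑ p, σbar (σhat (f.1 (om l)) i l) i p * σbar (x m) p m :=
        Finset.sum_congr rfl fun l _ => Finset.sum_comm
    _ = ∑ l, ∑ m, f.1 (om l) * σbar (x m) l m :=
        Finset.sum_congr rfl fun l _ => Finset.sum_congr rfl fun m _ => key l m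
    _ = ∑ m, ∑ l, f.1 (om l) * σbar (x m) l m := Finset.sum_comm
    _ = f.1 x := (hf f x).symm

end Stmt9
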